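/- Remark 6.2 (constrained optimization as a special case of the compound approach): Assume θ(s) ≠ 0 for every s ∈ S, and define the standardized efficiencies Ψ_E(π) = Φ_E(π)/Φ_E* and Ψ_I(π) = Φ_I*/Φ_I(π) = 4^K·Π_{s∈S} π(s)(1−π(s)). Then for every constant C ∈ (0,1): (a) there exists a unique π^C ∈ (0,1)^S maximizing Ψ_E over the constraint set {π ∈ (0,1)^S : Ψ_I(π) ≥ C}; (b) the constraint is active, i.e. Ψ_I(π^C) = C; and (c) there exists ω_C ∈ (0,1) such that π^C equals the optimal compound target π*_{ω_C}, the unique minimizer of Ψ_{ω_C}. -/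

import Mathlib

open Finset

noncomputable section

/-- The ethical criterion `Φ_E(π) = Σ_s p(s)·c_s(π(s))`, where `c_s(x) = θ(s)·x` if
`θ(s) > 0`, `c_s(x) = −θ(s)·(1−x)` if `θ(s) < 0`, and `c_s(x) = 0` if `θ(s) = 0`. -/
def PhiE (S : Type*) [Fintype S] (θ p : S → ℝ) (π : S → ℝ) : ℝ :=
  ∑ s : S, p s *
    (if 0 < θ s then θ s * π s else if θ s < 0 then -θ s * (1 - π s) else 0)

/-- The supremum `Φ_E* = Σ_s p(s)·|θ(s)|` of the ethical criterion. -/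
def PhiEstar (S : Type*) [Fintype S] (θ p : S → ℝ) : ℝ :=
  ∑ s : S, p s * |θ s|

/-- The D-optimality inferential criterion `Φ_I(π) = ∏_s (π(s)(1−π(s)))⁻¹`. -/
def PhiI (S : Type*) [Fintype S] (π : S → ℝ) : ℝ :=
  ∏ s : S, (π s * (1 - π s))⁻¹

/-- The minimum `Φ_I* = 4^K` of the inferential criterion over `(0,1)^S`. -/
def PhiIstar (S : Type*) [Fintype S] : ℝ :=
  4 ^ Fintype.card S

/-- The open box `(0,1)^S` of admissible allocations. -/
def Dset (S : Type*) : Set (S → ℝ) :=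
  Set.univ.pi fun _ : S => Set.Ioo (0 : ℝ) 1

/-- The compound criterion `Ψ_ω(π) = ω·Φ_E*/Φ_E(π) + (1−ω)·Φ_I(π)/Φ_I*`. -/
def Psi (S : Type*) [Fintype S] (ω : ℝ) (θ p : S → ℝ) (π : S → ℝ) : ℝ :=
  ω * PhiEstar S θ p / PhiE S θ p π + (1 - ω) * PhiI S π / PhiIstar S

/-- `π` is the optimal compound target `π*_ω(θ,p)`: it minimizes `Ψ_ω` over `(0,1)^S`.
(By the paper's Theorem 5.1 this minimizer exists and is unique.) -/
def IsCompoundTarget (S : Type*) [Fintype S] (ω : ℝ) (θ p : S → ℝ) (π : S → ℝ) : Prop :=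
  π ∈ Dset S ∧ ∀ π' ∈ Dset S, Psi S ω θ p π ≤ Psi S ω θ p π'

/-- The standardized ethical efficiency `Ψ_E(π) = Φ_E(π)/Φ_E*`. -/
def PsiE (S : Type*) [Fintype S] (θ p : S → ℝ) (π : S → ℝ) : ℝ :=
  PhiE S θ p π / PhiEstar S θ p

/-- The standardized inferential efficiency `Ψ_I(π) = Φ_I*/Φ_I(π) = 4^K·∏_s π(s)(1−π(s))`. -/
def PsiI (S : Type*) [Fintype S] (π : S → ℝ) : ℝ :=
  (4 : ℝ) ^ Fintype.card S * ∏ s : S, π s * (1 - π s)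

set_option linter.unusedSectionVars false

section Aux

variable {S : Type*} [Fintype S]

lemma mem_Dset_iff {π : S → ℝ} : π ∈ Dset S ↔ ∀ s, 0 < π s ∧ π s < 1 := by
  simp [Dset, Set.mem_pi]

lemma isOpen_Dset : IsOpen (Dset S) :=
  isOpen_set_pi Set.finite_univ fun _ _ => isOpen_Ioo

lemma convex_Dset : Convex ℝ (Dset S) :=
  convex_pi fun _ _ => convex_Ioo 0 1

lemma h_pos {x : ℝ} (h1 : 0 < x) (h2 : x < 1) : 0 < x * (1 - x) :=
  mul_pos h1 (by linarith)

lemma prod_h_pos {π : S → ℝ} (hπ : π ∈ Dset S) : 0 < ∏ s : S, π s * (1 - π s) :=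
  Finset.prod_pos fun s _ => h_pos (mem_Dset_iff.1 hπ s).1 (mem_Dset_iff.1 hπ s).2

lemma psiI_eq_prod (π : S → ℝ) : PsiI S π = ∏ s : S, 4 * (π s * (1 - π s)) := by
  rw [PsiI, ← Finset.card_univ, ← Finset.prod_const, ← Finset.prod_mul_distrib]

lemma psiI_pos {π : S → ℝ} (hπ : π ∈ Dset S) : 0 < PsiI S π :=
  mul_pos (by positivity) (prod_h_pos hπ)

lemma continuous_psiI : Continuous (PsiI S) := by
  unfold PsiI; fun_prop

lemma phiEstar_pos [Nonempty S] {θ p : S → ℝ} (hp : ∀ s, 0 < p s) (hθ : ∀ s, θ s ≠ 0) :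
    0 < PhiEstar S θ p :=
  Finset.sum_pos (fun s _ => mul_pos (hp s) (abs_pos.2 (hθ s))) univ_nonempty

lemma phiE_affine (θ p : S → ℝ) (π : S → ℝ) :
    PhiE S θ p π = ∑ s : S, (p s * θ s) * π s +
      ∑ s : S, (if θ s < 0 then -(p s * θ s) else 0) := by
  rw [PhiE, ← Finset.sum_add_distrib]
  refine Finset.sum_congr rfl fun s _ => ?_
  rcases lt_trichotomy (θ s) 0 with h | h | h
  · rw [if_neg (by linarith), if_pos h, if_pos h]; ring
  · simp [h]
  · rw [if_pos h, if_neg (by linarith)]; ring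

lemma phiE_pos [Nonempty S] {θ p : S → ℝ} (hp : ∀ s, 0 < p s) (hθ : ∀ s, θ s ≠ 0)
    {π : S → ℝ} (hπ : π ∈ Dset S) : 0 < PhiE S θ p π := by
  refine Finset.sum_pos (fun s _ => ?_) univ_nonempty
  obtain ⟨h0, h1⟩ := mem_Dset_iff.1 hπ s
  rcases lt_trichotomy (θ s) 0 with h | h | h
  · rw [if_neg (by linarith), if_pos h]
    exact mul_pos (hp s) (mul_pos (by linarith) (by linarith))
  · exact absurd h (hθ s)
  · rw [if_pos h]
    exact mul_pos (hp s) (mul_pos h h0)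

lemma psiE_pos [Nonempty S] {θ p : S → ℝ} (hp : ∀ s, 0 < p s) (hθ : ∀ s, θ s ≠ 0)
    {π : S → ℝ} (hπ : π ∈ Dset S) : 0 < PsiE S θ p π :=
  div_pos (phiE_pos hp hθ hπ) (phiEstar_pos hp hθ)

/-- The derivative (gradient) of `PhiE`, as a continuous linear map. -/
def LEmap (S : Type*) [Fintype S] (θ p : S → ℝ) : (S → ℝ) →L[ℝ] ℝ :=
  ∑ s : S, (p s * θ s) • (ContinuousLinearMap.proj s : (S → ℝ) →L[ℝ] ℝ)

lemma LEmap_apply (θ p : S → ℝ) (v : S → ℝ) :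
    LEmap S θ p v = ∑ s : S, (p s * θ s) * v s := by
  simp [LEmap]

lemma hasStrictFDerivAt_phiE (θ p : S → ℝ) (π : S → ℝ) :
    HasStrictFDerivAt (PhiE S θ p) (LEmap S θ p) π := by
  have : ∀ π : S → ℝ, PhiE S θ p π = (∑ s : S, (if θ s < 0 then -(p s * θ s) else 0)) +
      ∑ s : S, (p s * θ s) * π s := fun π => by rw [phiE_affine]; ring
  simp only [funext this]
  apply HasStrictFDerivAt.const_add
  apply HasStrictFDerivAt.fun_sum
  intro s _
  exact ((p s * θ s) • (ContinuousLinearMap.proj s : (S → ℝ) →L[ℝ] ℝ)).hasStrictFDerivAt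

lemma phiE_add_smul (θ p : S → ℝ) (π v : S → ℝ) (t : ℝ) :
    PhiE S θ p (π + t • v) = PhiE S θ p π + t * LEmap S θ p v := by
  rw [phiE_affine, phiE_affine, LEmap_apply]
  have : ∀ s : S, (p s * θ s) * (π + t • v) s
      = (p s * θ s) * π s + t * ((p s * θ s) * v s) := fun s => by
    simp only [Pi.add_apply, Pi.smul_apply, smul_eq_mul]; ring
  rw [Finset.sum_congr rfl fun s _ => this s, Finset.sum_add_distrib, ← Finset.mul_sum]
  ring

lemma phiE_combo (θ p : S → ℝ) (x y : S → ℝ) {a b : ℝ} (hab : a + b = 1) :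
    PhiE S θ p (a • x + b • y) = a * PhiE S θ p x + b * PhiE S θ p y := by
  rw [phiE_affine, phiE_affine, phiE_affine]
  have : ∀ s : S, (p s * θ s) * (a • x + b • y) s
      = a * ((p s * θ s) * x s) + b * ((p s * θ s) * y s) := fun s => by
    simp only [Pi.add_apply, Pi.smul_apply, smul_eq_mul]; ring
  rw [Finset.sum_congr rfl fun s _ => this s, Finset.sum_add_distrib,
    ← Finset.mul_sum, ← Finset.mul_sum]
  linear_combination (-(∑ s : S, (if θ s < 0 then -(p s * θ s) else 0))) * hab

/-- The derivative (gradient) of `PsiI`, as a continuous linear map. -/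
def LImap (S : Type*) [Fintype S] [DecidableEq S] (π : S → ℝ) : (S → ℝ) →L[ℝ] ℝ :=
  ((4 : ℝ) ^ Fintype.card S) • ∑ s : S,
    ((1 - 2 * π s) * ∏ t ∈ Finset.univ.erase s, (π t * (1 - π t))) •
      (ContinuousLinearMap.proj s : (S → ℝ) →L[ℝ] ℝ)

lemma LImap_apply [DecidableEq S] (π v : S → ℝ) :
    LImap S π v = (4 : ℝ) ^ Fintype.card S *
      ∑ s : S, ((1 - 2 * π s) * ∏ t ∈ Finset.univ.erase s, (π t * (1 - π t))) * v s := by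
  simp [LImap, Finset.mul_sum]

lemma hasStrictFDerivAt_psiI [DecidableEq S] (π : S → ℝ) :
    HasStrictFDerivAt (PsiI S) (LImap S π) π := by
  have hJ : HasStrictFDerivAt (fun π : S → ℝ => ∏ s : S, π s * (1 - π s))
      (∑ s : S, ((1 - 2 * π s) * ∏ t ∈ Finset.univ.erase s, (π t * (1 - π t))) •
        (ContinuousLinearMap.proj s : (S → ℝ) →L[ℝ] ℝ)) π := by
    have hfac : ∀ s : S, HasStrictFDerivAt (fun π : S → ℝ => π s * (1 - π s))
        ((1 - 2 * π s) • (ContinuousLinearMap.proj s : (S → ℝ) →L[ℝ] ℝ)) π := by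
      intro s
      have h1 : HasStrictFDerivAt (fun π : S → ℝ => π s)
          (ContinuousLinearMap.proj s : (S → ℝ) →L[ℝ] ℝ) π :=
        (ContinuousLinearMap.proj s : (S → ℝ) →L[ℝ] ℝ).hasStrictFDerivAt
      have h2 : HasStrictFDerivAt (fun π : S → ℝ => 1 - π s)
          (-(ContinuousLinearMap.proj s : (S → ℝ) →L[ℝ] ℝ)) π :=
        h1.const_sub 1
      refine (h1.mul h2).congr_fderiv ?_
      ext v
      simp only [ContinuousLinearMap.add_apply, ContinuousLinearMap.smul_apply,
        ContinuousLinearMap.neg_apply, ContinuousLinearMap.proj_apply, smul_eq_mul]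
      ring
    refine (HasStrictFDerivAt.finset_prod fun s _ => hfac s).congr_fderiv ?_
    ext v
    simp only [ContinuousLinearMap.coe_sum', Finset.sum_apply, ContinuousLinearMap.smul_apply,
      ContinuousLinearMap.proj_apply, smul_eq_mul]
    exact Finset.sum_congr rfl fun s _ => by ring
  have := hJ.const_mul ((4 : ℝ) ^ Fintype.card S)
  exact this

lemma psi_eq_on_D [Nonempty S] {θ p : S → ℝ} (hp : ∀ s, 0 < p s) (hθ : ∀ s, θ s ≠ 0)
    (ω : ℝ) {π : S → ℝ} (hπ : π ∈ Dset S) :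
    Psi S ω θ p π = ω / PsiE S θ p π + (1 - ω) / PsiI S π := by
  have hE := phiE_pos hp hθ hπ
  have hEs := phiEstar_pos hp hθ
  have hP := prod_h_pos hπ
  have h4 : (0:ℝ) < 4 ^ Fintype.card S := by positivity
  rw [Psi, PsiE, PsiI, PhiI, Finset.prod_inv_distrib, PhiIstar]
  field_simp

lemma activity [Nonempty S] {θ p : S → ℝ} (hp : ∀ s, 0 < p s) (hθ : ∀ s, θ s ≠ 0)
    {C : ℝ} {π0 : S → ℝ} (h0D : π0 ∈ Dset S) (h0C : C ≤ PsiI S π0)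
    (hmax : ∀ π ∈ Dset S, C ≤ PsiI S π → PhiE S θ p π ≤ PhiE S θ p π0) :
    PsiI S π0 = C := by
  classical
  by_contra hne
  have hlt : C < PsiI S π0 := lt_of_le_of_ne h0C (Ne.symm hne)
  obtain ⟨s0⟩ := (inferInstance : Nonempty S)
  set ε : ℝ := if 0 < θ s0 then 1 else -1 with hε
  set v : S → ℝ := fun s => if s = s0 then ε else 0 with hv
  -- the path
  set γ : ℝ → (S → ℝ) := fun t => π0 + t • v with hγ
  have hγcont : Continuous γ := by fun_prop
  have hγ0 : γ 0 = π0 := by simp [hγ]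
  have hU : IsOpen (Dset S ∩ {π : S → ℝ | C < PsiI S π}) :=
    isOpen_Dset.inter (isOpen_lt continuous_const continuous_psiI)
  have hmem : γ 0 ∈ Dset S ∩ {π : S → ℝ | C < PsiI S π} := by
    rw [hγ0]; exact ⟨h0D, hlt⟩
  have hev : ∀ᶠ t in nhds 0, γ t ∈ Dset S ∩ {π : S → ℝ | C < PsiI S π} :=
    hγcont.continuousAt.eventually_mem (hU.mem_nhds hmem)
  have hev' : ∀ᶠ t in nhdsWithin 0 (Set.Ioi 0), γ t ∈ Dset S ∩ {π : S → ℝ | C < PsiI S π} :=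
    hev.filter_mono nhdsWithin_le_nhds
  obtain ⟨t, ht, htpos⟩ := (hev'.and eventually_mem_nhdsWithin).exists
  -- PhiE increases along the path
  have hLE : LEmap S θ p v = p s0 * θ s0 * ε := by
    rw [LEmap_apply]
    rw [Finset.sum_eq_single s0]
    · simp [hv]
    · intro b _ hb; simp [hv, hb]
    · intro h; exact absurd (Finset.mem_univ s0) h
  have hLEpos : 0 < LEmap S θ p v := by
    rw [hLE, hε]
    rcases (hθ s0).lt_or_gt with h | h
    · rw [if_neg (by linarith)]; nlinarith [hp s0]
    · rw [if_pos h]; nlinarith [hp s0]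
  have hEt : PhiE S θ p (γ t) = PhiE S θ p π0 + t * LEmap S θ p v :=
    phiE_add_smul θ p π0 v t
  have := hmax (γ t) ht.1 (le_of_lt ht.2)
  rw [hEt] at this
  nlinarith [mul_pos htpos hLEpos]

lemma sqrt_coord_le {a b : ℝ} (ha : 0 < a ∧ a < 1) (hb : 0 < b ∧ b < 1) :
    Real.sqrt ((4 * (a * (1 - a))) * (4 * (b * (1 - b)))) ≤
      4 * (((a + b) / 2) * (1 - (a + b) / 2)) ∧
    (a ≠ b → Real.sqrt ((4 * (a * (1 - a))) * (4 * (b * (1 - b)))) <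
      4 * (((a + b) / 2) * (1 - (a + b) / 2))) := by
  have hx : 0 < 4 * (a * (1 - a)) := by nlinarith [ha.1, ha.2]
  have hy : 0 < 4 * (b * (1 - b)) := by nlinarith [hb.1, hb.2]
  set u := Real.sqrt ((4 * (a * (1 - a))) * (4 * (b * (1 - b)))) with hu
  have hu0 : 0 ≤ u := Real.sqrt_nonneg _
  have hu2 : u ^ 2 = (4 * (a * (1 - a))) * (4 * (b * (1 - b))) := by
    rw [hu, Real.sq_sqrt (by positivity)]
  constructor
  · nlinarith [sq_nonneg (4 * (a * (1 - a)) - 4 * (b * (1 - b))), sq_nonneg (a - b),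
      sq_nonneg (u - 4 * (a * (1 - a))), sq_nonneg (u - 4 * (b * (1 - b)))]
  · intro hab
    have hab' : a - b ≠ 0 := sub_ne_zero.2 hab
    have : (a - b) ^ 2 > 0 := by positivity
    nlinarith [sq_nonneg (4 * (a * (1 - a)) - 4 * (b * (1 - b))),
      sq_nonneg (u - 4 * (a * (1 - a))), sq_nonneg (u - 4 * (b * (1 - b)))]

lemma midpoint_psiI_gt {C : ℝ} (hC0 : 0 < C) {π1 π2 : S → ℝ}
    (h1D : π1 ∈ Dset S) (h2D : π2 ∈ Dset S)
    (h1C : C ≤ PsiI S π1) (h2C : C ≤ PsiI S π2) (hne : π1 ≠ π2) :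
    C < PsiI S (fun s => (π1 s + π2 s) / 2) := by
  classical
  set f : S → ℝ := fun s =>
    Real.sqrt ((4 * (π1 s * (1 - π1 s))) * (4 * (π2 s * (1 - π2 s)))) with hf
  have hd1 := fun s => mem_Dset_iff.1 h1D s
  have hd2 := fun s => mem_Dset_iff.1 h2D s
  have hxpos : ∀ s, 0 < 4 * (π1 s * (1 - π1 s)) := fun s => by
    nlinarith [(hd1 s).1, (hd1 s).2]
  have hypos : ∀ s, 0 < 4 * (π2 s * (1 - π2 s)) := fun s => by
    nlinarith [(hd2 s).1, (hd2 s).2]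
  have hfpos : ∀ s, 0 < f s := fun s => Real.sqrt_pos.2 (mul_pos (hxpos s) (hypos s))
  -- C ≤ ∏ f
  have hprodf : C ≤ ∏ s : S, f s := by
    have hsq : (∏ s : S, f s) ^ 2 = PsiI S π1 * PsiI S π2 := by
      rw [← Finset.prod_pow, psiI_eq_prod, psiI_eq_prod, ← Finset.prod_mul_distrib]
      refine Finset.prod_congr rfl fun s _ => ?_
      rw [hf, Real.sq_sqrt (mul_pos (hxpos s) (hypos s)).le]
    have h1 : C * C ≤ PsiI S π1 * PsiI S π2 :=
      mul_le_mul h1C h2C hC0.le (le_trans hC0.le h1C)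
    nlinarith [Finset.prod_nonneg (fun s (_ : s ∈ Finset.univ) => (hfpos s).le)]
  -- ∏ f < PsiI midpoint
  obtain ⟨s0, hs0⟩ := Function.ne_iff.1 hne
  have hlt : ∏ s : S, f s < PsiI S (fun s => (π1 s + π2 s) / 2) := by
    rw [psiI_eq_prod]
    refine Finset.prod_lt_prod (fun s _ => hfpos s) (fun s _ => ?_) ⟨s0, Finset.mem_univ s0, ?_⟩
    · exact (sqrt_coord_le (hd1 s) (hd2 s)).1
    · exact (sqrt_coord_le (hd1 s0) (hd2 s0)).2 hs0
  linarith

lemma unique_max [Nonempty S] {θ p : S → ℝ} (hp : ∀ s, 0 < p s) (hθ : ∀ s, θ s ≠ 0)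
    {C : ℝ} (hC0 : 0 < C) {π1 π2 : S → ℝ}
    (h1D : π1 ∈ Dset S) (h2D : π2 ∈ Dset S)
    (h1C : C ≤ PsiI S π1) (h2C : C ≤ PsiI S π2)
    (h1max : ∀ π ∈ Dset S, C ≤ PsiI S π → PhiE S θ p π ≤ PhiE S θ p π1) :
    PhiE S θ p π2 = PhiE S θ p π1 → π1 = π2 := by
  intro heq
  by_contra hne
  set m : S → ℝ := fun s => (π1 s + π2 s) / 2 with hm
  have hmD : m ∈ Dset S := by
    rw [mem_Dset_iff]
    intro s
    obtain ⟨a1, a2⟩ := mem_Dset_iff.1 h1D s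
    obtain ⟨b1, b2⟩ := mem_Dset_iff.1 h2D s
    constructor <;> [skip; skip] <;> simp only [hm] <;> nlinarith
  have hmC : C < PsiI S m := midpoint_psiI_gt hC0 h1D h2D h1C h2C hne
  have hmE : PhiE S θ p m = PhiE S θ p π1 := by
    have hcombo := phiE_combo θ p π1 π2 (a := (1:ℝ)/2) (b := (1:ℝ)/2) (by norm_num)
    have : m = ((1:ℝ)/2) • π1 + ((1:ℝ)/2) • π2 := by
      funext s; simp [hm]; ring
    rw [this, hcombo, heq]; ring
  have hmmax : ∀ π ∈ Dset S, C ≤ PsiI S π → PhiE S θ p π ≤ PhiE S θ p m := by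
    intro π hπ hπC; rw [hmE]; exact h1max π hπ hπC
  have := activity hp hθ hmD hmC.le hmmax
  linarith

lemma psiI_of_half : PsiI S (fun _ : S => (1:ℝ)/2) = 1 := by
  rw [psiI_eq_prod]
  have : ∀ s : S, (4 : ℝ) * ((1:ℝ)/2 * (1 - 1/2)) = 1 := fun s => by norm_num
  rw [Finset.prod_congr rfl fun s _ => this s, Finset.prod_const_one]

lemma exists_neg_mult [Nonempty S] [DecidableEq S] {θ p : S → ℝ}
    (hp : ∀ s, 0 < p s) (hθ : ∀ s, θ s ≠ 0) {C : ℝ} (hC1 : C < 1) {πC : S → ℝ}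
    (hD : πC ∈ Dset S) (hact : PsiI S πC = C)
    (hmax : ∀ π ∈ Dset S, C ≤ PsiI S π → PhiE S θ p π ≤ PhiE S θ p πC) :
    ∃ c : ℝ, c < 0 ∧ LImap S πC = c • LEmap S θ p := by
  obtain ⟨s1⟩ := (inferInstance : Nonempty S)
  -- local extremum on the level set
  have hextr : IsLocalExtrOn (PhiE S θ p) {π : S → ℝ | PsiI S π = PsiI S πC} πC := by
    right
    have h1 : ∀ᶠ x in nhdsWithin πC {π : S → ℝ | PsiI S π = PsiI S πC}, x ∈ Dset S :=
      (isOpen_Dset.eventually_mem hD).filter_mono nhdsWithin_le_nhds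
    have h2 : ∀ᶠ x in nhdsWithin πC {π : S → ℝ | PsiI S π = PsiI S πC},
        x ∈ {π : S → ℝ | PsiI S π = PsiI S πC} := eventually_mem_nhdsWithin
    filter_upwards [h1, h2] with x hx1 hx2
    exact hmax x hx1 (le_of_eq (by rw [hx2, hact]))
  obtain ⟨a, b, hab, heq⟩ := hextr.exists_multipliers_of_hasStrictFDerivAt_1d
    (hasStrictFDerivAt_psiI πC) (hasStrictFDerivAt_phiE θ p πC)
  have happ : ∀ v : S → ℝ, a * LImap S πC v + b * LEmap S θ p v = 0 := by
    intro v
    have := DFunLike.congr_fun heq v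
    simpa using this
  -- component values
  have hLEsingle : ∀ s : S, LEmap S θ p (Pi.single s 1) = p s * θ s := by
    intro s
    rw [LEmap_apply, Finset.sum_eq_single s]
    · simp
    · intro t _ ht; simp [Pi.single_apply, ht]
    · intro h; exact absurd (Finset.mem_univ s) h
  have hLIsingle : ∀ s : S, LImap S πC (Pi.single s 1) = (4 : ℝ) ^ Fintype.card S *
      ((1 - 2 * πC s) * ∏ t ∈ Finset.univ.erase s, (πC t * (1 - πC t))) := by
    intro s
    rw [LImap_apply, Finset.sum_eq_single s]
    · simp
    · intro t _ ht; simp [Pi.single_apply, ht]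
    · intro h; exact absurd (Finset.mem_univ s) h
  have hprod_erase_pos : ∀ s : S, 0 < ∏ t ∈ Finset.univ.erase s, (πC t * (1 - πC t)) := by
    intro s
    refine Finset.prod_pos fun t _ => ?_
    obtain ⟨u1, u2⟩ := mem_Dset_iff.1 hD t
    exact h_pos u1 u2
  -- if LImap = 0 then πC ≡ 1/2 and PsiI πC = 1 ≠ C
  have hLI_ne : LImap S πC ≠ 0 := by
    intro h0
    have hhalf : ∀ s : S, πC s = 1/2 := by
      intro s
      have := hLIsingle s
      rw [h0] at this
      simp only [ContinuousLinearMap.zero_apply] at this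
      have h4 : (0:ℝ) < 4 ^ Fintype.card S := by positivity
      have := (mul_eq_zero.1 this.symm).resolve_left h4.ne'
      have := (mul_eq_zero.1 this).resolve_right (hprod_erase_pos s).ne'
      linarith
    have : πC = fun _ : S => (1:ℝ)/2 := funext hhalf
    rw [this, psiI_of_half] at hact
    linarith
  -- a ≠ 0
  have ha : a ≠ 0 := by
    intro h0
    have hb : b ≠ 0 := by
      intro hb0; exact hab (by simp [h0, hb0, Prod.ext_iff])
    have := happ (Pi.single s1 1)
    rw [h0, hLEsingle s1] at this
    simp only [zero_mul, zero_add] at this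
    have := (mul_eq_zero.1 this).resolve_left hb
    exact absurd this (mul_ne_zero (hp s1).ne' (hθ s1))
  set c : ℝ := -b / a with hc
  have hcmul : LImap S πC = c • LEmap S θ p := by
    ext v
    have := happ v
    simp only [ContinuousLinearMap.smul_apply, smul_eq_mul, hc]
    field_simp
    linarith
  refine ⟨c, ?_, hcmul⟩
  -- exclude c = 0
  rcases lt_trichotomy c 0 with h | h | h
  · exact h
  · exfalso
    apply hLI_ne
    rw [hcmul, h, zero_smul]
  · -- c > 0 : perturb in the ascent direction
    exfalso
    set v : S → ℝ := fun s => if 0 < θ s then 1 else -1 with hv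
    have hA : 0 < LEmap S θ p v := by
      rw [LEmap_apply]
      refine Finset.sum_pos (fun s _ => ?_) univ_nonempty
      rcases (hθ s).lt_or_gt with hs | hs
      · rw [hv]; simp only [if_neg (by linarith : ¬ (0:ℝ) < θ s)]
        nlinarith [hp s]
      · rw [hv]; simp only [if_pos hs]
        nlinarith [hp s]
    have hLIv : 0 < LImap S πC v := by
      rw [hcmul]
      simpa using mul_pos h hA
    set γ : ℝ → (S → ℝ) := fun t => πC + t • v with hγ
    have hpath : HasDerivAt γ v 0 := by
      have h0 : HasDerivAt (fun t : ℝ => t • v) ((1:ℝ) • v) 0 :=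
        (hasDerivAt_id (0:ℝ)).smul_const v
      simpa [hγ, one_smul] using h0.const_add πC
    have hL0 : HasFDerivAt (PsiI S) (LImap S πC) (γ 0) := by
      simpa [hγ] using (hasStrictFDerivAt_psiI πC).hasFDerivAt
    have hφ : HasDerivAt (fun t => PsiI S (γ t)) (LImap S πC v) 0 :=
      hL0.comp_hasDerivAt 0 hpath
    have hslope : Filter.Tendsto (slope (fun t => PsiI S (γ t)) 0)
        (nhdsWithin 0 {(0:ℝ)}ᶜ) (nhds (LImap S πC v)) :=
      hasDerivAt_iff_tendsto_slope.1 hφ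
    have ev1 : ∀ᶠ t in nhdsWithin (0:ℝ) {(0:ℝ)}ᶜ,
        0 < slope (fun t => PsiI S (γ t)) 0 t :=
      hslope.eventually (eventually_gt_nhds hLIv)
    have ev2 : ∀ᶠ t in nhds (0:ℝ), γ t ∈ Dset S := by
      have hγcont : Continuous γ := by fun_prop
      have : γ 0 = πC := by simp [hγ]
      exact hγcont.continuousAt.eventually_mem (isOpen_Dset.mem_nhds (this ▸ hD))
    have hmono : nhdsWithin (0:ℝ) (Set.Ioi 0) ≤ nhdsWithin (0:ℝ) {(0:ℝ)}ᶜ :=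
      nhdsWithin_mono 0 (fun t ht => ne_of_gt ht)
    obtain ⟨t, ⟨hts, htD⟩, htpos⟩ :=
      (((ev1.filter_mono hmono).and (ev2.filter_mono nhdsWithin_le_nhds)).and
        eventually_mem_nhdsWithin).exists
    have htpos' : (0:ℝ) < t := htpos
    -- PsiI (γ t) > C
    have hPsiIgt : C < PsiI S (γ t) := by
      rw [slope_def_field] at hts
      have h0' : PsiI S (γ 0) = C := by simpa [hγ] using hact
      rw [h0', sub_zero] at hts
      rcases div_pos_iff.1 hts with ⟨hnum, _⟩ | ⟨_, hden⟩
      · linarith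
      · linarith
    have hle : PhiE S θ p (πC + t • v) ≤ PhiE S θ p πC := by
      simpa [hγ] using hmax (γ t) htD hPsiIgt.le
    rw [phiE_add_smul θ p πC v t] at hle
    linarith [mul_pos htpos' hA]

lemma inv_combo_le {u v a b : ℝ} (hu : 0 < u) (hv : 0 < v) (ha : 0 ≤ a) (hb : 0 ≤ b)
    (hab : a + b = 1) : (a * u + b * v)⁻¹ ≤ a * u⁻¹ + b * v⁻¹ := by
  have hb' : b = 1 - a := by linarith
  subst hb'
  have hpos : 0 < a * u + (1 - a) * v := by
    rcases eq_or_lt_of_le ha with h | h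
    · rw [← h]; nlinarith
    · nlinarith [mul_pos h hu, mul_nonneg hb hv.le]
  have key : a * u⁻¹ + (1 - a) * v⁻¹ - (a * u + (1 - a) * v)⁻¹
      = (a * (1 - a) * (u - v) ^ 2) / (u * v * (a * u + (1 - a) * v)) := by
    field_simp
    ring
  nlinarith [key, div_nonneg (by positivity : (0:ℝ) ≤ a * (1 - a) * (u - v) ^ 2)
    (by positivity : (0:ℝ) ≤ u * v * (a * u + (1 - a) * v))]

lemma psiE_combo [Nonempty S] (θ p : S → ℝ) (x y : S → ℝ) {a b : ℝ} (hab : a + b = 1) :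
    PsiE S θ p (a • x + b • y) = a * PsiE S θ p x + b * PsiE S θ p y := by
  rw [PsiE, PsiE, PsiE, phiE_combo θ p x y hab, add_div, mul_div_assoc, mul_div_assoc]

lemma convexOn_inv_psiE [Nonempty S] {θ p : S → ℝ} (hp : ∀ s, 0 < p s) (hθ : ∀ s, θ s ≠ 0) :
    ConvexOn ℝ (Dset S) (fun π => (PsiE S θ p π)⁻¹) := by
  refine ⟨convex_Dset, fun x hx y hy a b ha hb hab => ?_⟩
  simp only [smul_eq_mul]
  rw [psiE_combo θ p x y hab]
  exact inv_combo_le (psiE_pos hp hθ hx) (psiE_pos hp hθ hy) ha hb hab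

lemma coord_h_combo {x y a b : ℝ} (hx : 0 < x ∧ x < 1) (hy : 0 < y ∧ y < 1)
    (ha : 0 ≤ a) (hb : 0 ≤ b) (hab : a + b = 1) :
    (4 * (x * (1 - x))) ^ a * (4 * (y * (1 - y))) ^ b
      ≤ 4 * ((a * x + b * y) * (1 - (a * x + b * y))) := by
  have h1 : (0:ℝ) ≤ 4 * (x * (1 - x)) := by nlinarith [hx.1, hx.2]
  have h2 : (0:ℝ) ≤ 4 * (y * (1 - y)) := by nlinarith [hy.1, hy.2]
  calc (4 * (x * (1 - x))) ^ a * (4 * (y * (1 - y))) ^ b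
      ≤ a * (4 * (x * (1 - x))) + b * (4 * (y * (1 - y))) :=
        Real.geom_mean_le_arith_mean2_weighted ha hb h1 h2 hab
    _ ≤ 4 * ((a * x + b * y) * (1 - (a * x + b * y))) := by
        have hb' : b = 1 - a := by linarith
        subst hb'
        nlinarith [mul_nonneg (mul_nonneg ha hb) (sq_nonneg (x - y))]

lemma convexOn_inv_psiI : ConvexOn ℝ (Dset S) (fun π => (PsiI S π)⁻¹) := by
  refine ⟨convex_Dset, fun x hx y hy a b ha hb hab => ?_⟩
  simp only [smul_eq_mul]
  have hm : a • x + b • y ∈ Dset S := convex_Dset hx hy ha hb hab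
  have hIx : 0 < PsiI S x := psiI_pos hx
  have hIy : 0 < PsiI S y := psiI_pos hy
  have hIm : 0 < PsiI S (a • x + b • y) := psiI_pos hm
  -- geometric mean bound on the product
  have hgm : PsiI S x ^ a * PsiI S y ^ b ≤ PsiI S (a • x + b • y) := by
    rw [psiI_eq_prod, psiI_eq_prod, psiI_eq_prod,
      ← Real.finset_prod_rpow _ _ (fun s _ => by
        obtain ⟨u1, u2⟩ := mem_Dset_iff.1 hx s; nlinarith) a,
      ← Real.finset_prod_rpow _ _ (fun s _ => by
        obtain ⟨u1, u2⟩ := mem_Dset_iff.1 hy s; nlinarith) b,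
      ← Finset.prod_mul_distrib]
    refine Finset.prod_le_prod (fun s _ => ?_) (fun s _ => ?_)
    · obtain ⟨u1, u2⟩ := mem_Dset_iff.1 hx s
      obtain ⟨v1, v2⟩ := mem_Dset_iff.1 hy s
      exact mul_nonneg (Real.rpow_nonneg (by nlinarith) a)
        (Real.rpow_nonneg (by nlinarith) b)
    · obtain ⟨u1, u2⟩ := mem_Dset_iff.1 hx s
      obtain ⟨v1, v2⟩ := mem_Dset_iff.1 hy s
      have := coord_h_combo ⟨u1, u2⟩ ⟨v1, v2⟩ ha hb hab
      simpa [Pi.add_apply, Pi.smul_apply, smul_eq_mul] using this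
  have hgmpos : 0 < PsiI S x ^ a * PsiI S y ^ b :=
    mul_pos (Real.rpow_pos_of_pos hIx a) (Real.rpow_pos_of_pos hIy b)
  calc (PsiI S (a • x + b • y))⁻¹ ≤ (PsiI S x ^ a * PsiI S y ^ b)⁻¹ := by
        exact inv_anti₀ hgmpos hgm
    _ = (PsiI S x)⁻¹ ^ a * (PsiI S y)⁻¹ ^ b := by
        rw [mul_inv, Real.inv_rpow hIx.le, Real.inv_rpow hIy.le]
    _ ≤ a * (PsiI S x)⁻¹ + b * (PsiI S y)⁻¹ :=
        Real.geom_mean_le_arith_mean2_weighted ha hb (inv_nonneg.2 hIx.le)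
          (inv_nonneg.2 hIy.le) hab

lemma global_min_of_deriv_zero [Nonempty S] {θ p : S → ℝ}
    (hp : ∀ s, 0 < p s) (hθ : ∀ s, θ s ≠ 0) {ω : ℝ} (hω0 : 0 ≤ ω) (hω1 : ω ≤ 1)
    {πC : S → ℝ} (hD : πC ∈ Dset S)
    (hderiv : HasFDerivAt (fun π => ω * (PsiE S θ p π)⁻¹ + (1 - ω) * (PsiI S π)⁻¹)
      (0 : (S → ℝ) →L[ℝ] ℝ) πC) :
    ∀ y ∈ Dset S, ω * (PsiE S θ p πC)⁻¹ + (1 - ω) * (PsiI S πC)⁻¹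
      ≤ ω * (PsiE S θ p y)⁻¹ + (1 - ω) * (PsiI S y)⁻¹ := by
  intro y hy
  set G : (S → ℝ) → ℝ := fun π => ω * (PsiE S θ p π)⁻¹ + (1 - ω) * (PsiI S π)⁻¹ with hG
  have hGconv : ConvexOn ℝ (Dset S) G := by
    refine ⟨convex_Dset, fun x1 hx1 x2 hx2 a b ha hb hab => ?_⟩
    have e1 := (convexOn_inv_psiE hp hθ).2 hx1 hx2 ha hb hab
    have e2 := (convexOn_inv_psiI).2 hx1 hx2 ha hb hab
    simp only [smul_eq_mul] at e1 e2 ⊢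
    have t1 := mul_le_mul_of_nonneg_left e1 hω0
    have t2 := mul_le_mul_of_nonneg_left e2 (by linarith : (0:ℝ) ≤ 1 - ω)
    simp only [hG]
    nlinarith [t1, t2]
  set γ : ℝ → (S → ℝ) := fun t => πC + t • (y - πC) with hγ
  have hγ0 : γ 0 = πC := by simp [hγ]
  have hγ1 : γ 1 = y := by funext s; simp [hγ]
  have hseg : ∀ t ∈ Set.Icc (0:ℝ) 1, γ t ∈ Dset S := by
    intro t ht
    have : γ t = (1 - t) • πC + t • y := by
      funext s
      simp only [hγ, Pi.add_apply, Pi.smul_apply, Pi.sub_apply, smul_eq_mul, sub_smul, one_smul]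
      ring
    rw [this]
    exact convex_Dset hD hy (by linarith [ht.2]) ht.1 (by ring)
  set g : ℝ → ℝ := fun t => G (γ t) with hg
  have hgconv : ConvexOn ℝ (Set.Icc (0:ℝ) 1) g := by
    refine ⟨convex_Icc 0 1, fun t1 ht1 t2 ht2 a b ha hb hab => ?_⟩
    have haff : γ (a * t1 + b * t2) = a • γ t1 + b • γ t2 := by
      funext s
      have hb' : b = 1 - a := by linarith
      subst hb'
      simp only [hγ, Pi.add_apply, Pi.smul_apply, Pi.sub_apply, smul_eq_mul]
      ring
    have : g (a • t1 + b • t2) = G (a • γ t1 + b • γ t2) := by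
      rw [hg]; simp only [smul_eq_mul]; rw [haff]
    rw [this]
    exact hGconv.2 (hseg t1 ht1) (hseg t2 ht2) ha hb hab
  have hpath : HasDerivAt γ (y - πC) 0 := by
    have h0 : HasDerivAt (fun t : ℝ => t • (y - πC)) ((1:ℝ) • (y - πC)) 0 :=
      (hasDerivAt_id (0:ℝ)).smul_const (y - πC)
    simpa [hγ, one_smul] using h0.const_add πC
  have hG0 : HasFDerivAt G (0 : (S → ℝ) →L[ℝ] ℝ) (γ 0) := by rw [hγ0]; exact hderiv
  have hgd : HasDerivAt g 0 0 := by
    have := hG0.comp_hasDerivAt 0 hpath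
    simpa [hg, Function.comp_def] using this
  have hslope := hgconv.le_slope_of_hasDerivAt (Set.left_mem_Icc.2 zero_le_one)
    (Set.right_mem_Icc.2 zero_le_one) zero_lt_one hgd
  rw [slope_def_field] at hslope
  have : g 0 ≤ g 1 := by
    have h1 : (1:ℝ) - 0 = 1 := by norm_num
    rw [h1, div_one] at hslope
    linarith
  rw [hg] at this
  simpa [hγ0, hγ1, hG] using this

lemma scal_helper {X Y : ℝ} (hX : 0 < X) (hY : 0 < Y) :
    (Y / (X + Y)) * (-X) + (1 - Y / (X + Y)) * Y = 0 := by
  have h : X + Y ≠ 0 := by positivity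
  field_simp
  ring

lemma continuous_phiE (θ p : S → ℝ) : Continuous (PhiE S θ p) := by
  refine continuous_finset_sum _ fun s _ => ?_
  split_ifs with h1 h2 <;> fun_prop

end Aux

/-- Remark 6.2 (constrained optimization as a special case of the compound approach):
if `θ(s) ≠ 0` for all `s`, then for every `C ∈ (0,1)` there is a unique `π^C ∈ (0,1)^S`
maximizing `Ψ_E` subject to `Ψ_I(π) ≥ C`; the constraint is active, `Ψ_I(π^C) = C`; and
`π^C` is the optimal compound target `π*_{ω_C}` for some weight `ω_C ∈ (0,1)`. -/
theorem constrained_is_compound (S : Type*) [Fintype S] [Nonempty S]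
    (θ p : S → ℝ) (hp : ∀ s, 0 < p s) (hθ : ∀ s, θ s ≠ 0)
    (C : ℝ) (hC0 : 0 < C) (hC1 : C < 1) :
    ∃ πC : S → ℝ,
      πC ∈ Dset S ∧ C ≤ PsiI S πC ∧
      (∀ π ∈ Dset S, C ≤ PsiI S π → PsiE S θ p π ≤ PsiE S θ p πC) ∧
      (∀ π ∈ Dset S, C ≤ PsiI S π →
        (∀ π' ∈ Dset S, C ≤ PsiI S π' → PsiE S θ p π' ≤ PsiE S θ p π) → π = πC) ∧
      PsiI S πC = C ∧
      ∃ ωC : ℝ, 0 < ωC ∧ ωC < 1 ∧ IsCompoundTarget S ωC θ p πC := by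
  classical
  have hEs : 0 < PhiEstar S θ p := phiEstar_pos hp hθ
  -- convert between PsiE and PhiE comparisons
  have hcmp : ∀ π π' : S → ℝ, (PsiE S θ p π ≤ PsiE S θ p π' ↔ PhiE S θ p π ≤ PhiE S θ p π') := by
    intro π π'
    exact div_le_div_iff_of_pos_right hEs
  -- the compact feasible set
  set F : Set (S → ℝ) :=
    (Set.univ.pi fun _ : S => Set.Icc (0:ℝ) 1) ∩ {π | C ≤ PsiI S π} with hF
  have hFcomp : IsCompact F :=
    (isCompact_univ_pi fun _ => isCompact_Icc).inter_right
      (isClosed_le continuous_const continuous_psiI)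
  have hhalfF : (fun _ : S => (1:ℝ)/2) ∈ F := by
    constructor
    · intro s _; exact ⟨by norm_num, by norm_num⟩
    · show C ≤ PsiI S (fun _ : S => (1:ℝ)/2)
      rw [psiI_of_half]; exact hC1.le
  have hFsubD : F ⊆ Dset S := by
    intro π ⟨hbox, hCle⟩
    rw [mem_Dset_iff]
    have hCle' : C ≤ PsiI S π := hCle
    rw [psiI_eq_prod] at hCle'
    have hne : ∀ s : S, (4:ℝ) * (π s * (1 - π s)) ≠ 0 := by
      have : (∏ s : S, (4:ℝ) * (π s * (1 - π s))) ≠ 0 := (lt_of_lt_of_le hC0 hCle').ne'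
      exact fun s => Finset.prod_ne_zero_iff.1 this s (Finset.mem_univ s)
    intro s
    obtain ⟨h0, h1⟩ := hbox s (Set.mem_univ s)
    have := hne s
    constructor
    · rcases lt_or_eq_of_le h0 with h | h
      · exact h
      · exfalso; apply this; rw [← h]; ring
    · rcases lt_or_eq_of_le h1 with h | h
      · exact h
      · exfalso; apply this; rw [h]; ring
  obtain ⟨πC, hπCF, hmaxF⟩ := hFcomp.exists_isMaxOn ⟨_, hhalfF⟩
    ((continuous_phiE θ p).continuousOn)
  have hπCD : πC ∈ Dset S := hFsubD hπCF
  have hπCC : C ≤ PsiI S πC := hπCF.2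
  have hmaxD : ∀ π ∈ Dset S, C ≤ PsiI S π → PhiE S θ p π ≤ PhiE S θ p πC := by
    intro π hπD hπC
    refine hmaxF ⟨?_, hπC⟩
    intro s _
    obtain ⟨h0, h1⟩ := mem_Dset_iff.1 hπD s
    exact ⟨h0.le, h1.le⟩
  have hact : PsiI S πC = C := activity hp hθ hπCD hπCC hmaxD
  -- the Lagrange multiplier
  obtain ⟨c, hc, hcmul⟩ := exists_neg_mult hp hθ hC1 hπCD hact hmaxD
  -- choose the ethical weight
  set E0 : ℝ := PsiE S θ p πC with hE0def
  have hE0 : 0 < E0 := psiE_pos hp hθ hπCD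
  set Es : ℝ := PhiEstar S θ p with hEsdef
  have hX : 0 < (E0 ^ 2)⁻¹ * Es⁻¹ := by positivity
  have hY : 0 < (C ^ 2)⁻¹ * (-c) := by
    have : 0 < -c := by linarith
    positivity
  set ω : ℝ := ((C ^ 2)⁻¹ * (-c)) / ((E0 ^ 2)⁻¹ * Es⁻¹ + (C ^ 2)⁻¹ * (-c)) with hωdef
  have hω0 : 0 < ω := div_pos hY (by positivity)
  have hω1 : ω < 1 := by
    rw [hωdef, div_lt_one (by positivity)]
    linarith
  -- derivative of the compound objective vanishes at πC
  have hPsiE' : HasStrictFDerivAt (PsiE S θ p) (Es⁻¹ • LEmap S θ p) πC := by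
    have h1 := (hasStrictFDerivAt_phiE θ p πC).const_mul Es⁻¹
    have h2 : PsiE S θ p = fun π => Es⁻¹ * PhiE S θ p π :=
      funext fun π => div_eq_inv_mul _ _
    rw [h2]
    exact h1
  have hInvE : HasStrictFDerivAt (fun π => (PsiE S θ p π)⁻¹)
      (-((E0 ^ 2)⁻¹ • (Es⁻¹ • LEmap S θ p))) πC := by
    have := (hasStrictDerivAt_inv hE0.ne').comp_hasStrictFDerivAt πC hPsiE'
    simpa [Function.comp_def] using this
  have hInvI : HasStrictFDerivAt (fun π => (PsiI S π)⁻¹)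
      (-((C ^ 2)⁻¹ • LImap S πC)) πC := by
    have hne : PsiI S πC ≠ 0 := by rw [hact]; exact hC0.ne'
    have := (hasStrictDerivAt_inv hne).comp_hasStrictFDerivAt πC (hasStrictFDerivAt_psiI πC)
    rw [hact] at this
    simpa [Function.comp_def] using this
  have hsum := (hInvE.const_mul ω).add (hInvI.const_mul (1 - ω))
  have hscal : ω * (-((E0 ^ 2)⁻¹ * Es⁻¹)) + (1 - ω) * ((C ^ 2)⁻¹ * (-c)) = 0 := by
    rw [hωdef]
    exact scal_helper hX hY
  have hzero : (ω • (-((E0 ^ 2)⁻¹ • (Es⁻¹ • LEmap S θ p))) +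
      (1 - ω) • (-((C ^ 2)⁻¹ • LImap S πC))) = 0 := by
    ext v
    rw [hcmul]
    simp only [ContinuousLinearMap.add_apply, ContinuousLinearMap.smul_apply,
      ContinuousLinearMap.neg_apply, smul_eq_mul, ContinuousLinearMap.zero_apply]
    linear_combination (LEmap S θ p v) * hscal
  rw [hzero] at hsum
  have hmin := global_min_of_deriv_zero hp hθ hω0.le hω1.le hπCD hsum.hasFDerivAt
  -- assemble the statement
  refine ⟨πC, hπCD, hπCC, ?_, ?_, hact, ω, hω0, hω1, hπCD, ?_⟩
  · intro π hπD hπC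
    exact (hcmp π πC).2 (hmaxD π hπD hπC)
  · intro π hπD hπC hπmax
    have h1 : PhiE S θ p πC = PhiE S θ p π :=
      le_antisymm ((hcmp πC π).1 (hπmax πC hπCD hπCC)) (hmaxD π hπD hπC)
    have hπmax' : ∀ π' ∈ Dset S, C ≤ PsiI S π' → PhiE S θ p π' ≤ PhiE S θ p π :=
      fun π' hπ'D hπ'C => (hcmp π' π).1 (hπmax π' hπ'D hπ'C)
    exact unique_max hp hθ hC0 hπD hπCD hπC hπCC hπmax' h1
  · intro π' hπ'
    rw [psi_eq_on_D hp hθ ω hπCD, psi_eq_on_D hp hθ ω hπ']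
    exact hmin π' hπ'
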